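/- Let σ be a standard irreducible permutation of {1, …, n}, i.e., σ(1) = n and σ(n) = 1, with n ≥ 3. Define the Rauzy 'first case' update π' of an irreducible permutation π by π'(j) = π(j) if π(j) ≤ π(n), π'(j) = π(j) + 1 if π(n) < π(j) < n, and π'(j) = π(n) + 1 if π(j) = n. Then applying this update n − σ(n−1) times to σ yields a permutation π with π(n) = 1 and π(n−1) = n; in particular, after j applications (1 ≤ j ≤ n − σ(n−1)), the resulting permutation σ^(j) satisfies σ^(j)(n) = 1 and σ^(j)(n−1) = σ(n−1) + j. -/

import Mathlib

open Set

/-- A permutation of `{1,…,n}` is irreducible if it leaves no proper initial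
segment `{1,…,k}` invariant. -/
def PermIrreducible (n : ℕ) (σ : ℕ → ℕ) : Prop :=
  ∀ k : ℕ, 1 ≤ k → k < n → ¬ Set.MapsTo σ (Set.Icc 1 k) (Set.Icc 1 k)

/-- The permutation update of the first case of Rauzy induction. -/
def rauzyA (n : ℕ) (π : ℕ → ℕ) : ℕ → ℕ :=
  fun j => if π j ≤ π n then π j else if π j < n then π j + 1 else π n + 1

/-- Starting from a standard irreducible permutation `σ` and applying the
first-case Rauzy update `j` times (`1 ≤ j ≤ n - σ(n-1)`), the result `σ^(j)`
satisfies `σ^(j)(n) = 1` and `σ^(j)(n-1) = σ(n-1) + j`; in particular after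
`n - σ(n-1)` steps one reaches a loop permutation `π` with `π(n-1) = n`. -/
theorem standard_reaches_loop
    (n : ℕ) (hn : 3 ≤ n) (σ : ℕ → ℕ)
    (hbij : Set.BijOn σ (Set.Icc 1 n) (Set.Icc 1 n))
    (hirr : PermIrreducible n σ)
    (hstd1 : σ 1 = n) (hstdn : σ n = 1) :
    (∀ j : ℕ, 1 ≤ j → j ≤ n - σ (n - 1) →
        ((rauzyA n)^[j] σ) n = 1 ∧ ((rauzyA n)^[j] σ) (n - 1) = σ (n - 1) + j) ∧
      ((rauzyA n)^[n - σ (n - 1)] σ) (n - 1) = n := by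
  have hmem : n - 1 ∈ Set.Icc 1 n := by simp; omega
  have hmemn : n ∈ Set.Icc 1 n := by simp; omega
  have hmem1 : (1:ℕ) ∈ Set.Icc 1 n := by simp; omega
  set s := σ (n-1) with hs
  have hsne1 : s ≠ 1 := by
    intro h
    have := hbij.injOn hmem hmemn (by rw [← hs, h, hstdn])
    omega
  have hsnen : s ≠ n := by
    intro h
    have := hbij.injOn hmem hmem1 (by rw [← hs, h, hstd1])
    omega
  have hslt : s ≤ n := (hbij.mapsTo hmem).2
  have hsge : 1 ≤ s := (hbij.mapsTo hmem).1
  have key : ∀ j, j ≤ n - s →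
      ((rauzyA n)^[j] σ) n = 1 ∧ ((rauzyA n)^[j] σ) (n-1) = s + j := by
    intro j
    induction j with
    | zero => simp [hstdn]; exact hs.symm
    | succ j ih =>
      intro hj
      obtain ⟨h1, h2⟩ := ih (by omega)
      rw [Function.iterate_succ_apply']
      set π := (rauzyA n)^[j] σ with hπ
      refine ⟨by simp [rauzyA, h1], ?_⟩
      simp only [rauzyA]
      rw [h2, h1, if_neg (by omega), if_pos (by omega)]; omega
  refine ⟨fun j hj1 hj2 => key j hj2, ?_⟩
  have := (key (n - s) le_rfl).2
  rw [this]; omega
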